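/- (Variance decomposition of the multilinear extension) Let f^Ow be the multilinear extension of a capacity μ on N. Then the total variance of f^Ow with respect to the uniform measure on [0,1]^n decomposes as Var[f^Ow] = ∫_{[0,1]^n} (f^Ow(z) − μ̂(∅))^2 dz = Σ_{∅ ≠ S ⊆ N} (1/3^{|S|}) (μ̂(S))^2, where μ̂ is the Fourier transform of μ. -/

import Mathlib

open MeasureTheory Finset

/-- The uniform probability measure on the unit cube `[0,1]^n`. -/
noncomputable def unifCube (n : ℕ) : Measure (Fin n → ℝ) :=
  Measure.pi fun _ => volume.restrict (Set.Icc 0 1)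

/-- The Möbius transform of a set function. -/
noncomputable def mobius {n : ℕ} (ξ : Finset (Fin n) → ℝ) (S : Finset (Fin n)) : ℝ :=
  ∑ T ∈ S.powerset, (-1 : ℝ) ^ (S \ T).card * ξ T

/-- The Fourier transform of a set function. -/
noncomputable def fourierT {n : ℕ} (ξ : Finset (Fin n) → ℝ) (S : Finset (Fin n)) : ℝ :=
  (1 / 2 ^ n : ℝ) * ∑ T : Finset (Fin n), (-1 : ℝ) ^ (S ∩ T).card * ξ T

/-- The Banzhaf interaction transform of a set function. -/
noncomputable def banzhaf {n : ℕ} (ξ : Finset (Fin n) → ℝ) (S : Finset (Fin n)) : ℝ :=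
  (1 / 2 : ℝ) ^ (n - S.card) * ∑ K : Finset (Fin n), (-1 : ℝ) ^ (S \ K).card * ξ K

/-- The multilinear (Owen) extension associated with coefficients `m`. -/
noncomputable def fOw {n : ℕ} (m : Finset (Fin n) → ℝ) (x : Fin n → ℝ) : ℝ :=
  ∑ T : Finset (Fin n), m T * ∏ i ∈ T, x i

/-- A capacity: vanishes on the empty set and is monotone. -/
def Capacity {n : ℕ} (μ : Finset (Fin n) → ℝ) : Prop :=
  μ ∅ = 0 ∧ ∀ S T : Finset (Fin n), S ⊆ T → μ S ≤ μ T

/-- The ANOVA component of `f` associated with the subset `S`. -/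
noncomputable def anova {n : ℕ} (f : (Fin n → ℝ) → ℝ) (S : Finset (Fin n))
    (z : Fin n → ℝ) : ℝ :=
  ∑ T ∈ S.powerset, (-1 : ℝ) ^ (S \ T).card *
    ∫ y, f (fun i => if i ∈ T then z i else y i) ∂unifCube n

/-- The Choquet integral (Lovász extension) of a 2-additive capacity with
Möbius transform `m`. -/
noncomputable def fLo {n : ℕ} (m : Finset (Fin n) → ℝ) (z : Fin n → ℝ) : ℝ :=
  ∑ i, m {i} * z i +
    ∑ i, ∑ j ∈ Finset.univ.filter (fun j => i < j), m {i, j} * min (z i) (z j)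
noncomputable def coefC {n : ℕ} (m : Finset (Fin n) → ℝ) (S : Finset (Fin n)) : ℝ :=
  ∑ T : Finset (Fin n), if S ⊆ T then (1/2 : ℝ) ^ (T \ S).card * m T else 0

/-- sum over supersets of B as sum over subsets of Bᶜ -/
lemma sum_superset {n : ℕ} (B : Finset (Fin n)) (f : Finset (Fin n) → ℝ) :
    ∑ T : Finset (Fin n), (if B ⊆ T then f T else 0)
      = ∑ R ∈ Bᶜ.powerset, f (B ∪ R) := by
  rw [← Finset.sum_filter]
  refine Finset.sum_nbij' (fun T => T \ B) (fun R => B ∪ R) ?_ ?_ ?_ ?_ ?_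
  · intro T hT
    simp only [Finset.mem_filter, Finset.mem_univ, true_and] at hT
    simp only [Finset.mem_powerset]
    intro x hx
    simp only [Finset.mem_compl]
    exact (Finset.mem_sdiff.1 hx).2
  · intro R hR
    simp only [Finset.mem_filter, Finset.mem_univ, true_and]
    exact Finset.subset_union_left
  · intro T hT
    simp only [Finset.mem_filter, Finset.mem_univ, true_and] at hT
    exact Finset.union_sdiff_of_subset hT
  · intro R hR
    simp only [Finset.mem_powerset] at hR
    exact Finset.union_sdiff_cancel_left (Finset.disjoint_left.2 fun x hxB hxR =>
      (Finset.mem_compl.1 (hR hxR)) hxB)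
  · intro T hT
    simp only [Finset.mem_filter, Finset.mem_univ, true_and] at hT
    rw [Finset.union_sdiff_of_subset hT]

lemma sum_pow_powerset {n : ℕ} (A : Finset (Fin n)) (x : ℝ) :
    ∑ R ∈ A.powerset, x ^ R.card = (x + 1) ^ A.card := by
  have h := Finset.prod_add (fun _ : Fin n => x) (fun _ => (1:ℝ)) A
  simp only [Finset.prod_const, Finset.prod_const_one, mul_one] at h
  rw [h]
  exact Finset.sum_congr rfl fun R _ => by rw [one_pow, mul_one]

lemma powerset_eq_filter {n : ℕ} (T : Finset (Fin n)) :
    T.powerset = univ.filter (· ⊆ T) := by ext; simp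

lemma swap_powerset {n : ℕ} (g : Finset (Fin n) → Finset (Fin n) → ℝ) :
    ∑ T : Finset (Fin n), ∑ U ∈ T.powerset, g T U
      = ∑ U : Finset (Fin n), ∑ T : Finset (Fin n), if U ⊆ T then g T U else 0 := by
  simp_rw [powerset_eq_filter, Finset.sum_filter]
  exact Finset.sum_comm

lemma fourier_eq_coefC {n : ℕ} (μ : Finset (Fin n) → ℝ) (S : Finset (Fin n)) :
    fourierT μ S = (-1 : ℝ) ^ S.card * (1/2 : ℝ) ^ S.card * coefC (mobius μ) S := by
  have step1 : coefC (mobius μ) S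
      = ∑ U : Finset (Fin n), ∑ T : Finset (Fin n),
          if S ∪ U ⊆ T then (1/2 : ℝ) ^ (T \ S).card * ((-1 : ℝ) ^ (T \ U).card * μ U) else 0 := by
    unfold coefC mobius
    have h : ∀ T : Finset (Fin n),
        (if S ⊆ T then (1/2 : ℝ) ^ (T \ S).card *
            ∑ U ∈ T.powerset, (-1 : ℝ) ^ (T \ U).card * μ U else 0)
        = ∑ U ∈ T.powerset, (if S ⊆ T then
            (1/2 : ℝ) ^ (T \ S).card * ((-1 : ℝ) ^ (T \ U).card * μ U) else 0) := by
      intro T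
      by_cases h : S ⊆ T
      · simp [h, Finset.mul_sum]
      · simp [h]
    rw [Finset.sum_congr rfl fun T _ => h T, swap_powerset]
    refine Finset.sum_congr rfl fun U _ => Finset.sum_congr rfl fun T _ => ?_
    by_cases h1 : U ⊆ T <;> by_cases h2 : S ⊆ T <;>
      simp [h1, h2, Finset.union_subset_iff]
  rw [step1]
  have step2 : ∀ U : Finset (Fin n),
      (∑ T : Finset (Fin n),
        if S ∪ U ⊆ T then (1/2 : ℝ) ^ (T \ S).card * ((-1 : ℝ) ^ (T \ U).card * μ U) else 0)
      = (1/2 : ℝ) ^ (U \ S).card * (-1 : ℝ) ^ (S \ U).card * μ U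
          * (1/2 : ℝ) ^ ((S ∪ U)ᶜ).card := by
    intro U
    rw [sum_superset (S ∪ U)]
    have hterm : ∀ R ∈ (S ∪ U)ᶜ.powerset,
        (1/2 : ℝ) ^ (((S ∪ U) ∪ R) \ S).card * ((-1 : ℝ) ^ (((S ∪ U) ∪ R) \ U).card * μ U)
        = ((1/2 : ℝ) ^ (U \ S).card * (-1 : ℝ) ^ (S \ U).card * μ U) * (-1/2 : ℝ) ^ R.card := by
      intro R hR
      rw [Finset.mem_powerset] at hR
      have hdSU : Disjoint R (S ∪ U) := by
        rw [Finset.disjoint_left]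
        intro x hx hx'
        exact (Finset.mem_compl.1 (hR hx)) hx'
      have hRS : R \ S = R := Finset.sdiff_eq_self_of_disjoint
        (hdSU.mono_right Finset.subset_union_left)
      have hRU : R \ U = R := Finset.sdiff_eq_self_of_disjoint
        (hdSU.mono_right Finset.subset_union_right)
      have c1 : (((S ∪ U) ∪ R) \ S).card = (U \ S).card + R.card := by
        rw [Finset.union_sdiff_distrib, Finset.union_sdiff_left, hRS,
          Finset.card_union_of_disjoint]
        exact (hdSU.mono_right Finset.subset_union_right).symm.mono_left Finset.sdiff_subset
      have c2 : (((S ∪ U) ∪ R) \ U).card = (S \ U).card + R.card := by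
        rw [Finset.union_sdiff_distrib, Finset.union_sdiff_right, hRU,
          Finset.card_union_of_disjoint]
        exact (hdSU.mono_right Finset.subset_union_left).symm.mono_left Finset.sdiff_subset
      have hmul : ((1:ℝ)/2) ^ R.card * (-1 : ℝ) ^ R.card = (-1/2 : ℝ) ^ R.card := by
        rw [← mul_pow]; norm_num
      rw [c1, c2, pow_add, pow_add, ← hmul]
      ring
    rw [Finset.sum_congr rfl hterm, ← Finset.mul_sum, sum_pow_powerset]
    norm_num
  rw [Finset.sum_congr rfl fun U _ => step2 U]
  unfold fourierT
  rw [Finset.mul_sum, Finset.mul_sum]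
  refine Finset.sum_congr rfl fun U _ => ?_
  have hs : (S ∩ U).card + (S \ U).card = S.card := by
    rw [Finset.card_inter_add_card_sdiff]
  have hsign : (-1:ℝ) ^ S.card * (-1:ℝ) ^ (S \ U).card = (-1:ℝ) ^ (S ∩ U).card := by
    rw [← hs, pow_add, mul_assoc, ← pow_add]
    have : Even ((S \ U).card + (S \ U).card) := ⟨(S \ U).card, rfl⟩
    rw [this.neg_one_pow, mul_one]
  have hpow : (1/2 : ℝ) ^ S.card * ((1/2 : ℝ) ^ (U \ S).card * (1/2 : ℝ) ^ ((S ∪ U)ᶜ).card)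
      = 1 / 2 ^ n := by
    rw [← pow_add, ← pow_add]
    have ha := Finset.card_sdiff_add_card U S
    have hb := Finset.card_add_card_compl (S ∪ U)
    rw [Fintype.card_fin] at hb
    rw [Finset.union_comm U S] at ha
    have hcard : S.card + ((U \ S).card + ((S ∪ U)ᶜ).card) = n := by omega
    rw [hcard, div_pow, one_pow]
  calc (1 / 2 ^ n : ℝ) * ((-1 : ℝ) ^ (S ∩ U).card * μ U)
      = ((-1:ℝ) ^ S.card * (-1:ℝ) ^ (S \ U).card) *
        ((1/2 : ℝ) ^ S.card * ((1/2 : ℝ) ^ (U \ S).card * (1/2 : ℝ) ^ ((S ∪ U)ᶜ).card)) * μ U := by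
        rw [hsign, hpow]; ring
    _ = (-1 : ℝ) ^ S.card * (1/2 : ℝ) ^ S.card *
        ((1/2 : ℝ) ^ (U \ S).card * (-1 : ℝ) ^ (S \ U).card * μ U
          * (1/2 : ℝ) ^ ((S ∪ U)ᶜ).card) := by ring

lemma fOw_expand {n : ℕ} (m : Finset (Fin n) → ℝ) (z : Fin n → ℝ) :
    fOw m z = ∑ S : Finset (Fin n), coefC m S * ∏ i ∈ S, (z i - 1/2) := by
  unfold fOw
  have h : ∀ T : Finset (Fin n), m T * ∏ i ∈ T, z i
      = ∑ S ∈ T.powerset, m T * ((∏ i ∈ S, (z i - 1/2)) * (1/2 : ℝ) ^ (T \ S).card) := by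
    intro T
    rw [← Finset.mul_sum]
    congr 1
    have h2 : ∀ i ∈ T, z i = (z i - 1/2) + 1/2 := fun i _ => by ring
    rw [Finset.prod_congr rfl h2, Finset.prod_add]
    exact Finset.sum_congr rfl fun s _ => by rw [Finset.prod_const]
  rw [Finset.sum_congr rfl fun T _ => h T, swap_powerset]
  refine Finset.sum_congr rfl fun U _ => ?_
  unfold coefC
  rw [Finset.sum_mul]
  refine Finset.sum_congr rfl fun T _ => ?_
  by_cases hUT : U ⊆ T
  · simp only [hUT, if_true]; ring
  · simp [hUT]

def Cube : Type := ℝ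

noncomputable instance : MeasureSpace Cube :=
  @MeasureSpace.mk Cube (inferInstance : MeasurableSpace ℝ)
    ((volume : Measure ℝ).restrict (Set.Icc 0 1))

instance : SigmaFinite (volume : Measure Cube) :=
  inferInstanceAs (SigmaFinite ((volume : Measure ℝ).restrict (Set.Icc 0 1)))

lemma cube_integral_prod {n : ℕ} (f : Fin n → ℝ → ℝ) :
    ∫ x, ∏ i, f i (x i) ∂unifCube n
      = ∏ i, ∫ x, f i x ∂((volume : Measure ℝ).restrict (Set.Icc 0 1)) :=
  MeasureTheory.integral_fintype_prod_eq_prod (𝕜 := ℝ) (ι := Fin n) (fun i (x : ℝ) => f i x)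

lemma cube_integrable_prod {n : ℕ} (f : Fin n → ℝ → ℝ)
    (hf : ∀ i, Integrable (f i) ((volume : Measure ℝ).restrict (Set.Icc 0 1))) :
    Integrable (fun x : Fin n → ℝ => ∏ i, f i (x i)) (unifCube n) :=
  MeasureTheory.Integrable.fintype_prod (𝕜 := ℝ) (f := fun i (x : ℝ) => f i x) hf

lemma int_Icc (f : ℝ → ℝ) : ∫ x, f x ∂((volume : Measure ℝ).restrict (Set.Icc 0 1))
    = ∫ x in (0:ℝ)..1, f x := by
  rw [intervalIntegral.integral_of_le (by norm_num : (0:ℝ) ≤ 1)]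
  exact MeasureTheory.integral_Icc_eq_integral_Ioc

lemma I0 : ∫ _x, (1:ℝ) ∂((volume : Measure ℝ).restrict (Set.Icc 0 1)) = 1 := by
  rw [int_Icc]; simp

lemma I1 : ∫ x, (x - 1/2 : ℝ) ∂((volume : Measure ℝ).restrict (Set.Icc 0 1)) = 0 := by
  rw [int_Icc]
  rw [intervalIntegral.integral_comp_sub_right (fun u => u) (1/2), integral_id]
  norm_num

lemma I2 : ∫ x, ((x - 1/2) * (x - 1/2) : ℝ) ∂((volume : Measure ℝ).restrict (Set.Icc 0 1)) = 1/12 := by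
  have h : ∀ x : ℝ, (x - 1/2) * (x - 1/2) = (x - 1/2)^2 := fun x => (sq _).symm
  simp_rw [h]
  rw [int_Icc]
  rw [intervalIntegral.integral_comp_sub_right (fun u => u^2) (1/2), integral_pow]
  norm_num

/-- the one-dimensional factor -/
noncomputable def hfac {n : ℕ} (S S' : Finset (Fin n)) (i : Fin n) (x : ℝ) : ℝ :=
  (if i ∈ S then x - 1/2 else 1) * (if i ∈ S' then x - 1/2 else 1)

lemma hfac_integrable {n : ℕ} (S S' : Finset (Fin n)) (i : Fin n) :
    Integrable (hfac S S' i) ((volume : Measure ℝ).restrict (Set.Icc 0 1)) := by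
  have : Continuous (hfac S S' i) := by
    unfold hfac
    by_cases h1 : i ∈ S <;> by_cases h2 : i ∈ S' <;> simp [h1, h2] <;> continuity
  exact this.integrableOn_Icc

lemma hfac_integral {n : ℕ} (S S' : Finset (Fin n)) (i : Fin n) :
    ∫ x, hfac S S' i x ∂((volume : Measure ℝ).restrict (Set.Icc 0 1))
      = if i ∈ S then (if i ∈ S' then 1/12 else 0) else (if i ∈ S' then 0 else 1) := by
  unfold hfac
  by_cases h1 : i ∈ S <;> by_cases h2 : i ∈ S' <;> simp only [h1, h2, if_true, if_false]
  · exact I2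
  · simp_rw [mul_one]; exact I1
  · simp_rw [one_mul]; exact I1
  · simp_rw [one_mul]; exact I0

lemma prod_form {n : ℕ} (S S' : Finset (Fin n)) (z : Fin n → ℝ) :
    (∏ i ∈ S, (z i - 1/2)) * (∏ i ∈ S', (z i - 1/2)) = ∏ i : Fin n, hfac S S' i (z i) := by
  unfold hfac
  rw [Finset.prod_mul_distrib, Finset.prod_ite_mem, Finset.prod_ite_mem,
    Finset.univ_inter, Finset.univ_inter]

lemma basis_integrable {n : ℕ} (S S' : Finset (Fin n)) :
    Integrable (fun z : Fin n → ℝ =>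
      (∏ i ∈ S, (z i - 1/2)) * (∏ i ∈ S', (z i - 1/2))) (unifCube n) := by
  simp_rw [prod_form]
  exact cube_integrable_prod _ (hfac_integrable S S')

lemma basis_orthogonal {n : ℕ} (S S' : Finset (Fin n)) :
    ∫ z, (∏ i ∈ S, (z i - 1/2)) * (∏ i ∈ S', (z i - 1/2)) ∂unifCube n
      = if S = S' then (1/12 : ℝ) ^ S.card else 0 := by
  simp_rw [prod_form]
  rw [cube_integral_prod]
  rw [Finset.prod_congr rfl fun i _ => hfac_integral S S' i]
  by_cases h : S = S'
  · subst h
    rw [if_pos rfl]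
    have : ∀ i : Fin n, (if i ∈ S then (if i ∈ S then (1/12 : ℝ) else 0) else if i ∈ S then 0 else 1)
        = if i ∈ S then (1/12 : ℝ) else 1 := by
      intro i; by_cases hi : i ∈ S <;> simp [hi]
    rw [Finset.prod_congr rfl fun i _ => this i, Finset.prod_ite_mem, Finset.univ_inter,
      Finset.prod_const]
  · rw [if_neg h]
    have : ∃ i, (i ∈ S) ≠ (i ∈ S') := by
      by_contra hc
      push_neg at hc
      exact h (Finset.ext fun i => by rw [hc i])
    obtain ⟨i, hi⟩ := this
    refine Finset.prod_eq_zero (Finset.mem_univ i) ?_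
    by_cases h1 : i ∈ S <;> by_cases h2 : i ∈ S' <;> simp_all


/-- Variance decomposition of the multilinear extension:
`Var[f^Ow] = ∑_{∅ ≠ S ⊆ N} (1/3^{|S|}) μ̂(S)²`. -/
theorem variance_decomposition_fOw (n : ℕ) (μ : Finset (Fin n) → ℝ) (hμ : Capacity μ) :
    (∫ z, (fOw (mobius μ) z - fourierT μ ∅) ^ 2 ∂unifCube n) =
      ∑ S ∈ Finset.univ.filter (fun S : Finset (Fin n) => S ≠ ∅),
        (1 / 3 ^ S.card : ℝ) * (fourierT μ S) ^ 2 := by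
  classical
  set c : Finset (Fin n) → ℝ := coefC (mobius μ) with hc
  set F : Finset (Finset (Fin n)) := Finset.univ.filter (fun S : Finset (Fin n) => S ≠ ∅) with hF
  have hfour0 : fourierT μ ∅ = c ∅ := by
    rw [fourier_eq_coefC μ ∅]; simp; rfl
  have hdiff : ∀ z : Fin n → ℝ, fOw (mobius μ) z - fourierT μ ∅
      = ∑ S ∈ F, c S * ∏ i ∈ S, (z i - 1/2) := by
    intro z
    rw [fOw_expand, hfour0]
    have hsplit := Finset.sum_filter_add_sum_filter_not Finset.univ
      (fun S : Finset (Fin n) => S = ∅) (fun S => c S * ∏ i ∈ S, (z i - 1/2))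
    have h1 : Finset.univ.filter (fun S : Finset (Fin n) => S = ∅) = {∅} := by
      ext T; simp
    rw [h1, Finset.sum_singleton, Finset.prod_empty, mul_one] at hsplit
    have h2 : Finset.univ.filter (fun S : Finset (Fin n) => ¬ S = ∅) = F := rfl
    rw [h2] at hsplit
    rw [← hsplit]; ring
  simp_rw [hdiff]
  have hexp : ∀ z : Fin n → ℝ, (∑ S ∈ F, c S * ∏ i ∈ S, (z i - 1/2)) ^ 2
      = ∑ S ∈ F, ∑ S' ∈ F,
          (c S * c S') * ((∏ i ∈ S, (z i - 1/2)) * (∏ i ∈ S', (z i - 1/2))) := by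
    intro z
    rw [sq, Finset.sum_mul_sum]
    exact Finset.sum_congr rfl fun S _ => Finset.sum_congr rfl fun S' _ => by ring
  simp_rw [hexp]
  rw [MeasureTheory.integral_finset_sum]
  swap
  · intro S _
    exact integrable_finset_sum _ fun S' _ => ((basis_integrable S S').const_mul _)
  have hint : ∀ S ∈ F, (∫ z, ∑ S' ∈ F,
      (c S * c S') * ((∏ i ∈ S, (z i - 1/2)) * (∏ i ∈ S', (z i - 1/2))) ∂unifCube n)
      = (1/12 : ℝ) ^ S.card * (c S) ^ 2 := by
    intro S hS
    rw [MeasureTheory.integral_finset_sum _ fun S' _ => ((basis_integrable S S').const_mul _)]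
    have h3 : ∀ S' ∈ F, (∫ z, (c S * c S') *
        ((∏ i ∈ S, (z i - 1/2)) * (∏ i ∈ S', (z i - 1/2))) ∂unifCube n)
        = (c S * c S') * if S = S' then (1/12 : ℝ) ^ S.card else 0 := by
      intro S' _
      rw [MeasureTheory.integral_const_mul, basis_orthogonal]
    rw [Finset.sum_congr rfl h3]
    have h4 : ∀ S' ∈ F, (c S * c S') * (if S = S' then (1/12 : ℝ) ^ S.card else 0)
        = if S' = S then (1/12 : ℝ) ^ S.card * (c S) ^ 2 else 0 := by
      intro S' _
      by_cases h : S = S'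
      · subst h; simp [sq]; ring
      · simp [h, Ne.symm h, fun hh : S' = S => h hh.symm]
    rw [Finset.sum_congr rfl h4, Finset.sum_ite_eq' F S, if_pos hS]
  rw [Finset.sum_congr rfl hint]
  refine Finset.sum_congr rfl fun S _ => ?_
  rw [fourier_eq_coefC μ S, ← hc]
  have h1 : ((-1:ℝ) ^ S.card) ^ 2 = 1 := by
    rw [← pow_mul, mul_comm, pow_mul]; norm_num
  rw [mul_pow, mul_pow, h1, one_mul]
  have h2 : ((1/2 : ℝ) ^ S.card) ^ 2 = (1/4 : ℝ) ^ S.card := by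
    rw [← pow_mul, mul_comm, pow_mul]; norm_num
  have h3 : (1 / 3 ^ S.card : ℝ) = (1/3 : ℝ) ^ S.card := by
    rw [div_pow, one_pow]
  rw [h2, h3, ← mul_assoc, ← mul_pow]
  norm_num
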